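/- Let μ be the standard Gaussian measure on ℝ^N (the product of N independent standard normal distributions N(0,1)), let J be an n_L×N real matrix, σ a real number, β a real number, and Q₀ a fixed N×n_L real matrix. For ξ ∈ ℝ^N define the noise-induced output error e(ξ) := −σ · Jξ and the feedback weight update ΔQ(ξ) := −(σ ξ) e(ξ)ᵀ − β Q₀. Then the expectation of ΔQ under μ, taken entrywise, equals σ² Jᵀ − β Q₀. (Core expectation computation of the feedback learning rule: anti-Hebbian plasticity between injected noise and the noise-carried output error aligns the feedback weights with the transposed network Jacobian, up to weight decay.) -/

import Mathlib

open Matrix MeasureTheory ProbabilityTheory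

section FeedbackAux
open Real Filter

lemma gauss_integral_eq (g : ℝ → ℝ) :
    ∫ x, g x ∂(gaussianReal 0 1) = ∫ x, gaussianPDFReal 0 1 x * g x := by
  rw [gaussianReal_of_var_ne_zero 0 one_ne_zero]
  have hmeas : Measurable fun x => (gaussianPDFReal 0 1 x).toNNReal :=
    (measurable_gaussianPDFReal 0 1).real_toNNReal
  rw [show (gaussianPDF 0 1) = fun x => ((gaussianPDFReal 0 1 x).toNNReal : ENNReal) from rfl]
  rw [integral_withDensity_eq_integral_smul hmeas]
  congr 1; ext x
  simp [NNReal.smul_def, Real.coe_toNNReal _ (gaussianPDFReal_nonneg 0 1 x)]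

lemma gauss_integrable_iff (g : ℝ → ℝ) :
    Integrable g (gaussianReal 0 1) ↔
      Integrable (fun x => gaussianPDFReal 0 1 x * g x) volume := by
  rw [gaussianReal_of_var_ne_zero 0 one_ne_zero]
  have hmeas : Measurable fun x => (gaussianPDFReal 0 1 x).toNNReal :=
    (measurable_gaussianPDFReal 0 1).real_toNNReal
  rw [show (gaussianPDF 0 1) = fun x => ((gaussianPDFReal 0 1 x).toNNReal : ENNReal) from rfl]
  rw [integrable_withDensity_iff_integrable_smul hmeas]
  constructor <;> intro h <;> refine h.congr (Filter.Eventually.of_forall fun x => ?_) <;>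
    simp [NNReal.smul_def, Real.coe_toNNReal _ (gaussianPDFReal_nonneg 0 1 x)]

lemma pdf_form (x : ℝ) :
    gaussianPDFReal 0 1 x = (√(2 * π))⁻¹ * rexp (-(1/2) * x ^ 2) := by
  simp only [gaussianPDFReal, NNReal.coe_one, mul_one, sub_zero]
  ring_nf

lemma gauss_m1 : ∫ x, x ∂(gaussianReal 0 1) = 0 := by
  rw [gauss_integral_eq]
  have h := integral_neg_eq_self (fun x : ℝ => gaussianPDFReal 0 1 x * x) (volume : Measure ℝ)
  have h2 : ∀ x : ℝ, gaussianPDFReal 0 1 (-x) * (-x) = -(gaussianPDFReal 0 1 x * x) := by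
    intro x; rw [pdf_form, pdf_form]; ring_nf
  simp_rw [h2, integral_neg] at h
  linarith

lemma ioi_moment : ∫ x in Set.Ioi (0:ℝ), x ^ 2 * rexp (-(1/2) * x ^ 2)
    = √2 * √π / 2 := by
  have h1 : ∫ x in Set.Ioi (0:ℝ), x ^ 2 * rexp (-(1/2) * x ^ 2)
      = ∫ x in Set.Ioi (0:ℝ), x ^ (2:ℝ) * rexp (-(1/2) * x ^ (2:ℝ)) := by
    refine setIntegral_congr_fun measurableSet_Ioi (fun x hx => ?_)
    rw [show ((2:ℝ) = ((2:ℕ):ℝ)) from by norm_num, Real.rpow_natCast]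
  rw [h1, integral_rpow_mul_exp_neg_mul_rpow (by norm_num) (by norm_num) (by norm_num)]
  have hg : Real.Gamma ((2 + 1) / 2) = √π / 2 := by
    rw [show ((2:ℝ) + 1) / 2 = 1/2 + 1 by norm_num, Real.Gamma_add_one (by norm_num),
      Real.Gamma_one_half_eq]
    ring
  rw [hg]
  have hp : ((1:ℝ)/2) ^ (-((2:ℝ) + 1) / 2) = 2 * √2 := by
    rw [show (-((2:ℝ) + 1) / 2) = -(3/2) by norm_num, Real.rpow_neg (by norm_num),
      show ((1:ℝ)/2) = 2⁻¹ by norm_num, Real.inv_rpow (by norm_num), inv_inv,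
      show ((3:ℝ)/2) = 1 + 1/2 by norm_num, Real.rpow_add (by norm_num), Real.rpow_one,
      ← Real.sqrt_eq_rpow]
  rw [hp]; ring

lemma gauss_m2 : ∫ x, x ^ 2 ∂(gaussianReal 0 1) = 1 := by
  rw [gauss_integral_eq]
  have h : ∀ x : ℝ, gaussianPDFReal 0 1 x * x ^ 2
      = (√(2 * π))⁻¹ * ((fun t : ℝ => t ^ 2 * rexp (-(1/2) * t ^ 2)) |x|) := by
    intro x
    simp only [pdf_form, sq_abs]
    ring
  simp_rw [h, integral_const_mul, integral_comp_abs
    (f := fun t : ℝ => t ^ 2 * rexp (-(1/2) * t ^ 2)), ioi_moment]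
  rw [Real.sqrt_mul (by norm_num)]
  have h2 : (0:ℝ) < √2 := Real.sqrt_pos.mpr (by norm_num)
  have hπ : (0:ℝ) < √π := Real.sqrt_pos.mpr Real.pi_pos
  field_simp

-- integrability

lemma gauss_int_id : Integrable (fun x : ℝ => x) (gaussianReal 0 1) := by
  rw [gauss_integrable_iff]
  have h : Integrable (fun x : ℝ => (√(2 * π))⁻¹ * (x * rexp (-(1/2) * x ^ 2))) volume :=
    (integrable_mul_exp_neg_mul_sq (by norm_num : (0:ℝ) < 1/2)).const_mul _
  exact h.congr (Eventually.of_forall fun x => by simp only []; rw [pdf_form]; ring)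

lemma gauss_int_sq : Integrable (fun x : ℝ => x * x) (gaussianReal 0 1) := by
  rw [gauss_integrable_iff]
  have h : Integrable (fun x : ℝ => (√(2 * π))⁻¹ * (x ^ (2:ℝ) * rexp (-(1/2) * x ^ 2))) volume :=
    (integrable_rpow_mul_exp_neg_mul_sq (by norm_num : (0:ℝ) < 1/2)
      (by norm_num : (-1:ℝ) < 2)).const_mul _
  refine h.congr (Eventually.of_forall fun x => ?_)
  simp only []; rw [pdf_form, show ((2:ℝ) = ((2:ℕ):ℝ)) from by norm_num, Real.rpow_natCast]
  ring

lemma pi_integrable {N : ℕ} (i k : Fin N) :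
    Integrable (fun ξ : Fin N → ℝ => ξ i * ξ k)
      (Measure.pi fun _ : Fin N => gaussianReal 0 1) := by
  letI : MeasureSpace ℝ := ⟨gaussianReal 0 1⟩
  haveI : SigmaFinite (volume : Measure ℝ) := by
    show SigmaFinite (gaussianReal 0 1); infer_instance
  rw [show (Measure.pi fun _ : Fin N => gaussianReal 0 1) = volume from (volume_pi ..).symm]
  by_cases h : i = k
  · subst h
    have := Integrable.fintype_prod (E := ℝ) (μ := fun _ => gaussianReal 0 1)
      (f := fun l : Fin N => fun x : ℝ => if l = i then x * x else 1) (fun l => by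
        by_cases hl : l = i <;> simp [hl, gauss_int_sq, integrable_const, volume]
        )
    refine this.congr (Eventually.of_forall fun ξ => ?_)
    simp only []
    rw [Finset.prod_ite_eq' Finset.univ i (fun l => ξ l * ξ l)]
    simp
  · have := Integrable.fintype_prod (E := ℝ) (μ := fun _ => gaussianReal 0 1)
      (f := fun l : Fin N => fun x : ℝ => if l = i then x else if l = k then x else 1)
      (fun l => by
        by_cases hl : l = i
        · simpa [hl] using gauss_int_id
        · by_cases hlk : l = k <;> simp [hl, hlk, gauss_int_id, integrable_const, volume])
    refine this.congr (Eventually.of_forall fun ξ => ?_)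
    simp only []
    rw [← Finset.prod_subset (Finset.subset_univ ({i, k} : Finset (Fin N)))
      (fun x _ hx => by
        simp only [Finset.mem_insert, Finset.mem_singleton, not_or] at hx
        simp [hx.1, hx.2])]
    rw [Finset.prod_pair h]
    simp [h, Ne.symm h]

lemma pi_cov {N : ℕ} (i k : Fin N) :
    ∫ ξ : Fin N → ℝ, ξ i * ξ k ∂(Measure.pi fun _ : Fin N => gaussianReal 0 1)
      = if i = k then 1 else 0 := by
  letI : MeasureSpace ℝ := ⟨gaussianReal 0 1⟩
  haveI : SigmaFinite (volume : Measure ℝ) := by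
    show SigmaFinite (gaussianReal 0 1); infer_instance
  rw [show (Measure.pi fun _ : Fin N => gaussianReal 0 1) = volume from (volume_pi ..).symm]
  by_cases h : i = k
  · subst h
    simp only [if_pos rfl]
    have hrw : ∀ ξ : Fin N → ℝ, ξ i * ξ i
        = ∏ l, (fun l : Fin N => fun x : ℝ => if l = i then x * x else 1) l (ξ l) := by
      intro ξ
      simp only []
      rw [Finset.prod_ite_eq' Finset.univ i (fun l => ξ l * ξ l)]
      simp
    simp_rw [hrw]
    rw [MeasureTheory.integral_fintype_prod_volume_eq_prod
      (f := fun l : Fin N => fun x : ℝ => if l = i then x * x else 1)]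
    have : ∀ l : Fin N, (∫ x : ℝ, if l = i then x * x else 1) = 1 := by
      intro l
      by_cases hl : l = i
      · simp only [hl, if_pos rfl]
        have : ∀ x : ℝ, x * x = x ^ 2 := fun x => (sq x).symm
        simp_rw [this]
        exact gauss_m2
      · simp only [if_neg hl]
        show ∫ _ : ℝ, (1:ℝ) ∂(gaussianReal 0 1) = 1
        simp
    simp [this]
  · simp only [if_neg h]
    have hrw : ∀ ξ : Fin N → ℝ, ξ i * ξ k
        = ∏ l, (fun l : Fin N => fun x : ℝ => if l = i then x else if l = k then x else 1) l
          (ξ l) := by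
      intro ξ
      simp only []
      rw [← Finset.prod_subset (Finset.subset_univ ({i, k} : Finset (Fin N)))
        (fun x _ hx => by
          simp only [Finset.mem_insert, Finset.mem_singleton, not_or] at hx
          simp [hx.1, hx.2])]
      rw [Finset.prod_pair h]
      simp [h, Ne.symm h]
    simp_rw [hrw]
    rw [MeasureTheory.integral_fintype_prod_volume_eq_prod
      (f := fun l : Fin N => fun x : ℝ => if l = i then x else if l = k then x else 1)]
    refine Finset.prod_eq_zero (Finset.mem_univ i) ?_
    simp only [if_pos rfl]
    exact gauss_m1

end FeedbackAux

open Filter in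
/-- Core expectation computation of the feedback learning rule: with standard
Gaussian noise `ξ` injected into the network, output error `e(ξ) = −σ Jξ` and
anti-Hebbian update `ΔQ(ξ) = −(σξ) e(ξ)ᵀ − β Q₀`, the entrywise expectation of
`ΔQ` equals `σ² Jᵀ − β Q₀`. -/
theorem feedback_learning_expectation {nL N : ℕ}
    (J : Matrix (Fin nL) (Fin N) ℝ) (σ β : ℝ)
    (Q₀ : Matrix (Fin N) (Fin nL) ℝ) :
    ∀ (i : Fin N) (j : Fin nL),
      (∫ ξ : Fin N → ℝ,
          (-(Matrix.vecMulVec (σ • ξ) (-σ • (J *ᵥ ξ))) - β • Q₀) i j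
          ∂(Measure.pi fun _ : Fin N => gaussianReal 0 1)) =
        (σ ^ 2 • Jᵀ - β • Q₀) i j := by
  intro i j
  set μ := Measure.pi fun _ : Fin N => gaussianReal 0 1 with hμ
  haveI : IsProbabilityMeasure μ := by rw [hμ]; infer_instance
  have key : ∀ ξ : Fin N → ℝ,
      (-(Matrix.vecMulVec (σ • ξ) (-σ • (J *ᵥ ξ))) - β • Q₀) i j
        = (∑ k, (σ ^ 2 * J j k) * (ξ i * ξ k)) + (-(β * Q₀ i j)) := by
    intro ξ
    simp only [Matrix.sub_apply, Matrix.neg_apply, Matrix.vecMulVec_apply, Pi.smul_apply,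
      Matrix.smul_apply, smul_eq_mul, Matrix.mulVec, dotProduct]
    rw [sub_eq_add_neg]
    congr 1
    rw [Finset.mul_sum, Finset.mul_sum, ← Finset.sum_neg_distrib]
    exact Finset.sum_congr rfl fun k _ => by ring
  simp_rw [key]
  rw [integral_add (by
      exact integrable_finset_sum _ fun k _ => (pi_integrable i k).const_mul _)
    (integrable_const _)]
  rw [integral_finset_sum _ fun k _ => (pi_integrable i k).const_mul _]
  simp_rw [integral_const_mul, pi_cov, integral_const, probReal_univ]
  simp only [ENNReal.toReal_one, smul_eq_mul, one_mul, mul_ite, mul_one, mul_zero]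
  rw [Finset.sum_ite_eq Finset.univ i fun k => σ ^ 2 * J j k]
  simp [Matrix.sub_apply, Matrix.smul_apply, Matrix.transpose_apply, sub_eq_add_neg]
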